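/- Let g : ℝ → ℝ be continuous, L-periodic, with 0 < g_0 ≤ g ≤ g_1, and Y* = {(y₁,y₂) : 0 < y₁ < L, 0 < y₂ < g(y₁)}. For φ ∈ L¹(R^ε), where R^ε = {(x,y): 0<x<1, 0<y< ε g(x/ε^α)}, define the unfolding T_ε φ(x, y₁, y₂) = φ(ε^α [x/ε^α]_L L + ε^α y₁, ε y₂) for x ∈ I_ε and T_ε φ = 0 for x ∈ Λ_ε, where I_ε = (0, ε^α L(N_ε+1)) and Λ_ε = (0,1)\I_ε. Then (1/L) ∫_{(0,1)×Y*} T_ε φ(x,y₁,y₂) dx dy₁ dy₂ = (1/ε) ∫_{R^ε_0} φ(x,y) dx dy, where R^ε_0 = {(x,y) ∈ R^ε : x ∈ I_ε}. -/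

import Mathlib

open MeasureTheory Set
open scoped ENNReal NNReal

namespace Stmt12Helpers

lemma smul_prod_smul {A B : Type*} [MeasurableSpace A] [MeasurableSpace B]
    (c d : ℝ≥0) (μ : Measure A) (ν : Measure B) [SigmaFinite μ] [SigmaFinite ν] :
    ((c : ℝ≥0∞) • μ).prod ((d : ℝ≥0∞) • ν) = ((c : ℝ≥0∞) * d) • μ.prod ν := by
  have h1 : SigmaFinite ((c : ℝ≥0∞) • μ) := by rw [← ENNReal.smul_def]; infer_instance
  have h2 : SigmaFinite ((d : ℝ≥0∞) • ν) := by rw [← ENNReal.smul_def]; infer_instance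
  refine Measure.prod_eq fun s t hs ht => ?_
  simp only [Measure.smul_apply, smul_eq_mul, Measure.prod_prod]
  ring

lemma map_affine (a c : ℝ) (ha : a ≠ 0) :
    Measure.map (fun x => a * x + c) (volume : Measure ℝ)
      = ENNReal.ofReal |a⁻¹| • volume := by
  have h : (fun x : ℝ => a * x + c) = (fun x : ℝ => x + c) ∘ (fun x : ℝ => a * x) := rfl
  rw [h, ← Measure.map_map (measurable_add_const c) (measurable_const_mul a),
    show (fun x : ℝ => a * x) = (a * ·) from rfl, Real.map_volume_mul_left ha,
    Measure.map_smul, map_add_right_eq_self]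

lemma emb (a ε c : ℝ) (ha : a ≠ 0) (hε : ε ≠ 0) :
    MeasurableEmbedding (fun y : ℝ × ℝ => (a * y.1 + c, ε * y.2)) := by
  have h : (fun y : ℝ × ℝ => (a * y.1 + c, ε * y.2))
      = ⇑((affineHomeomorph a c ha).prodCongr (affineHomeomorph ε 0 hε)) := by
    funext y
    simp [affineHomeomorph, Homeomorph.prodCongr, Prod.map]
  rw [h]
  exact ((affineHomeomorph a c ha).prodCongr (affineHomeomorph ε 0 hε)).measurableEmbedding

lemma map_T (a ε c : ℝ) (ha : 0 < a) (hε : 0 < ε) :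
    Measure.map (fun y : ℝ × ℝ => (a * y.1 + c, ε * y.2)) volume
      = ENNReal.ofReal ((a * ε)⁻¹) • volume := by
  have h1 : (fun y : ℝ × ℝ => (a * y.1 + c, ε * y.2))
      = Prod.map (fun x : ℝ => a * x + c) (fun x : ℝ => ε * x + 0) := by
    funext y; simp [Prod.map]
  rw [Measure.volume_eq_prod, h1,
    ← Measure.map_prod_map _ _ ((measurable_const_mul a).add_const c)
      ((measurable_const_mul ε).add_const 0),
    map_affine a c ha.ne', map_affine ε 0 hε.ne']
  have e1 : ENNReal.ofReal |a⁻¹| = ((|a⁻¹|.toNNReal : ℝ≥0) : ℝ≥0∞) := rfl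
  have e2 : ENNReal.ofReal |ε⁻¹| = ((|ε⁻¹|.toNNReal : ℝ≥0) : ℝ≥0∞) := rfl
  rw [e1, e2, smul_prod_smul, ← Measure.volume_eq_prod]
  congr 1
  rw [← e1, ← e2, ← ENNReal.ofReal_mul (abs_nonneg _)]
  congr 1
  rw [abs_of_pos (inv_pos.mpr ha), abs_of_pos (inv_pos.mpr hε), mul_inv]

lemma cov (φ : ℝ × ℝ → ℝ) (a ε c : ℝ) (ha : 0 < a) (hε : 0 < ε)
    (S : Set (ℝ × ℝ)) :
    ∫ y in (fun y : ℝ × ℝ => (a * y.1 + c, ε * y.2)) ⁻¹' S, φ (a * y.1 + c, ε * y.2)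
      = (a * ε)⁻¹ * ∫ p in S, φ p := by
  have hemb := emb a ε c ha.ne' hε.ne'
  have h := hemb.setIntegral_map (μ := volume) φ S
  rw [map_T a ε c ha hε, Measure.restrict_smul, integral_smul_measure,
    ENNReal.toReal_ofReal (by positivity)] at h
  rw [← h, smul_eq_mul]

lemma cov_int (φ : ℝ × ℝ → ℝ) (a ε c : ℝ) (ha : 0 < a) (hε : 0 < ε)
    {S : Set (ℝ × ℝ)} (hS : MeasurableSet S) (hφ : IntegrableOn φ S volume) :
    IntegrableOn (fun y : ℝ × ℝ => φ (a * y.1 + c, ε * y.2))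
      ((fun y : ℝ × ℝ => (a * y.1 + c, ε * y.2)) ⁻¹' S) volume := by
  have hemb := emb a ε c ha.ne' hε.ne'
  show Integrable (φ ∘ fun y : ℝ × ℝ => (a * y.1 + c, ε * y.2)) _
  rw [← hemb.integrable_map_iff,
    ← Measure.restrict_map hemb.measurable hS, map_T a ε c ha hε, Measure.restrict_smul]
  exact (integrable_smul_measure (by rw [Ne, ENNReal.ofReal_eq_zero, not_le]; positivity)
    ENNReal.ofReal_ne_top).mpr hφ

lemma null_vline (c : ℝ) : (volume : Measure (ℝ × ℝ)) {p : ℝ × ℝ | p.1 = c} = 0 := by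
  have h : {p : ℝ × ℝ | p.1 = c} = ({c} : Set ℝ) ×ˢ (univ : Set ℝ) := by
    ext p; simp only [Set.mem_setOf_eq, Set.mem_prod, Set.mem_singleton_iff, Set.mem_univ, and_true]
  rw [h, Measure.volume_eq_prod, Measure.prod_prod]
  simp

lemma null_vline3 (c : ℝ) : (volume : Measure (ℝ × ℝ × ℝ)) {q : ℝ × ℝ × ℝ | q.1 = c} = 0 := by
  have h : {q : ℝ × ℝ × ℝ | q.1 = c} = ({c} : Set ℝ) ×ˢ (univ : Set (ℝ × ℝ)) := by
    ext q; simp only [Set.mem_setOf_eq, Set.mem_prod, Set.mem_singleton_iff, Set.mem_univ, and_true]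
  rw [h, Measure.volume_eq_prod, Measure.prod_prod]
  simp

lemma ae_eq_of_diff_subset {A : Type*} [MeasurableSpace A] {μ : Measure A}
    {s t n : Set A} (hn : μ n = 0) (h1 : s \ t ⊆ n) (h2 : t \ s ⊆ n) : s =ᵐ[μ] t := by
  rw [MeasureTheory.ae_eq_set]
  exact ⟨measure_mono_null h1 hn, measure_mono_null h2 hn⟩

lemma union_Ico (c : ℝ) (hc : 0 < c) (N : ℕ) :
    (⋃ k ∈ Finset.range (N + 1), Ico (c * k) (c * (k + 1))) = Ico 0 (c * (N + 1)) := by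
  induction N with
  | zero => simp
  | succ n ih =>
      rw [Finset.range_add_one]
      rw [Finset.set_biUnion_insert, ih, Set.union_comm,
        show ((n : ℝ) + 1) = ((n + 1 : ℕ) : ℝ) by push_cast; ring]
      exact Set.Ico_union_Ico_eq_Ico (by positivity)
        (by push_cast; nlinarith)

lemma disj_Ico (c : ℝ) (hc : 0 < c) {i j : ℕ} (hij : i ≠ j) :
    Disjoint (Ico (c * i) (c * (i + 1))) (Ico (c * j) (c * (j + 1))) := by
  rw [Set.Ico_disjoint_Ico]
  rcases hij.lt_or_gt with h | h
  · refine le_trans (min_le_left _ _) (le_trans ?_ (le_max_right _ _))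
    have : (i : ℝ) + 1 ≤ j := by exact_mod_cast h
    nlinarith
  · refine le_trans (min_le_right _ _) (le_trans ?_ (le_max_left _ _))
    have : (j : ℝ) + 1 ≤ i := by exact_mod_cast h
    nlinarith

lemma floor_eq_on_Ico (c : ℝ) (hc : 0 < c) (k : ℕ) {x : ℝ}
    (hx : x ∈ Ico (c * k) (c * (k + 1))) : ⌊x / c⌋ = k := by
  rw [Int.floor_eq_iff]
  constructor
  · rw [le_div_iff₀ hc]; push_cast; linarith [hx.1]
  · rw [div_lt_iff₀ hc]; push_cast; linarith [hx.2]

lemma periodic_nat (g : ℝ → ℝ) (L : ℝ) (hgper : ∀ x, g (x + L) = g x) (y : ℝ) (k : ℕ) :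
    g (y + L * k) = g y := by
  induction k with
  | zero => simp
  | succ n ih =>
      have h : y + L * (n + 1 : ℕ) = (y + L * n) + L := by push_cast; ring
      rw [h, hgper, ih]

end Stmt12Helpers

open Stmt12Helpers

set_option maxHeartbeats 1000000 in
/-- Exact integration identity for the thin-domain unfolding operator:
`(1/L) ∫_{(0,1)×Y*} T_ε φ = (1/ε) ∫_{R^ε_0} φ`. -/
theorem stmt12 (g : ℝ → ℝ) (L g0 g1 : ℝ) (hL : 0 < L)
    (hgc : Continuous g) (hgper : ∀ x, g (x + L) = g x)
    (hg0 : 0 < g0) (hg : ∀ x, g0 ≤ g x ∧ g x ≤ g1)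
    (α ε : ℝ) (hα : 0 < α) (hε : 0 < ε)
    (N : ℕ) (hN : ε ^ α * L * (N + 1) ≤ 1)
    (hNmax : ∀ m : ℕ, ε ^ α * L * (m + 1) ≤ 1 → m ≤ N)
    (φ : ℝ × ℝ → ℝ)
    (hφ : IntegrableOn φ
      {p : ℝ × ℝ | 0 < p.1 ∧ p.1 < 1 ∧ 0 < p.2 ∧ p.2 < ε * g (p.1 / ε ^ α)}) :
    (1 / L) * (∫ q in {q : ℝ × ℝ × ℝ |
        q.1 ∈ Ioo (0:ℝ) 1 ∧ 0 < q.2.1 ∧ q.2.1 < L ∧ 0 < q.2.2 ∧ q.2.2 < g q.2.1},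
        if q.1 ∈ Ioo (0:ℝ) (ε ^ α * L * (N + 1)) then
          φ (ε ^ α * (⌊q.1 / ε ^ α / L⌋ : ℝ) * L + ε ^ α * q.2.1, ε * q.2.2)
        else 0)
      = (1 / ε) * ∫ p in {p : ℝ × ℝ |
          p.1 ∈ Ioo (0:ℝ) (ε ^ α * L * (N + 1)) ∧
          0 < p.2 ∧ p.2 < ε * g (p.1 / ε ^ α)}, φ p := by
  have ha : 0 < ε ^ α := Real.rpow_pos_of_pos hε α
  set a : ℝ := ε ^ α with ha_def
  have haL : 0 < a * L := mul_pos ha hL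
  set M : ℝ := a * L * (N + 1) with hM_def
  have hM1 : M ≤ 1 := hN
  -- basic sets
  set Ystar : Set (ℝ × ℝ) := {y : ℝ × ℝ | 0 < y.1 ∧ y.1 < L ∧ 0 < y.2 ∧ y.2 < g y.1}
    with hY_def
  have hYmeas : MeasurableSet Ystar := by
    have h1 : IsOpen {y : ℝ × ℝ | 0 < y.1} := isOpen_lt continuous_const continuous_fst
    have h2 : IsOpen {y : ℝ × ℝ | y.1 < L} := isOpen_lt continuous_fst continuous_const
    have h3 : IsOpen {y : ℝ × ℝ | 0 < y.2} := isOpen_lt continuous_const continuous_snd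
    have h4 : IsOpen {y : ℝ × ℝ | y.2 < g y.1} :=
      isOpen_lt continuous_snd (hgc.comp continuous_fst)
    have he : Ystar = {y : ℝ × ℝ | 0 < y.1} ∩ ({y : ℝ × ℝ | y.1 < L} ∩
        ({y : ℝ × ℝ | 0 < y.2} ∩ {y : ℝ × ℝ | y.2 < g y.1})) := by
      rfl
    rw [he]
    exact (h1.inter (h2.inter (h3.inter h4))).measurableSet
  -- slab sets in ℝ²
  set C : ℕ → Set (ℝ × ℝ) := fun k =>
    {p : ℝ × ℝ | a * L * k < p.1 ∧ p.1 < a * L * (k + 1) ∧ 0 < p.2 ∧ p.2 < ε * g (p.1 / a)}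
    with hC_def
  set E : ℕ → Set (ℝ × ℝ) := fun k =>
    {p : ℝ × ℝ | a * L * k ≤ p.1 ∧ p.1 < a * L * (k + 1) ∧ 0 < p.2 ∧ p.2 < ε * g (p.1 / a)}
    with hE_def
  have hyopen : IsOpen {p : ℝ × ℝ | 0 < p.2 ∧ p.2 < ε * g (p.1 / a)} := by
    have h3 : IsOpen {p : ℝ × ℝ | 0 < p.2} := isOpen_lt continuous_const continuous_snd
    have h4 : IsOpen {p : ℝ × ℝ | p.2 < ε * g (p.1 / a)} :=
      isOpen_lt continuous_snd (continuous_const.mul (hgc.comp (continuous_fst.div_const a)))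
    have he : {p : ℝ × ℝ | 0 < p.2 ∧ p.2 < ε * g (p.1 / a)}
        = {p : ℝ × ℝ | 0 < p.2} ∩ {p : ℝ × ℝ | p.2 < ε * g (p.1 / a)} := rfl
    rw [he]; exact h3.inter h4
  have hCmeas : ∀ k : ℕ, MeasurableSet (C k) := by
    intro k
    have h1 : IsOpen {p : ℝ × ℝ | a * L * k < p.1} := isOpen_lt continuous_const continuous_fst
    have h2 : IsOpen {p : ℝ × ℝ | p.1 < a * L * (k + 1)} :=
      isOpen_lt continuous_fst continuous_const
    have he : C k = {p : ℝ × ℝ | a * L * k < p.1} ∩ ({p : ℝ × ℝ | p.1 < a * L * (k + 1)} ∩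
        {p : ℝ × ℝ | 0 < p.2 ∧ p.2 < ε * g (p.1 / a)}) := by
      rfl
    rw [he]
    exact (h1.inter (h2.inter hyopen)).measurableSet
  have hEmeas : ∀ k : ℕ, MeasurableSet (E k) := by
    intro k
    have he : E k = (Prod.fst ⁻¹' Ico (a * L * k) (a * L * (k + 1))) ∩
        {p : ℝ × ℝ | 0 < p.2 ∧ p.2 < ε * g (p.1 / a)} := by
      ext p
      simp only [hE_def, Set.mem_setOf_eq, Set.mem_inter_iff, Set.mem_preimage, Set.mem_Ico]
      tauto
    rw [he]
    exact (measurableSet_Ico.preimage measurable_fst).inter hyopen.measurableSet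
  -- C k ⊆ R^ε
  have hCsub : ∀ k : ℕ, k ≤ N → C k ⊆
      {p : ℝ × ℝ | 0 < p.1 ∧ p.1 < 1 ∧ 0 < p.2 ∧ p.2 < ε * g (p.1 / a)} := by
    intro k hk p hp
    simp only [hC_def, Set.mem_setOf_eq] at hp
    obtain ⟨h1, h2, h3, h4⟩ := hp
    have hk1 : (k : ℝ) + 1 ≤ (N : ℝ) + 1 := by
      have : (k : ℝ) ≤ N := by exact_mod_cast hk
      linarith
    have h0 : (0:ℝ) ≤ a * L * k := by positivity
    refine ⟨lt_of_le_of_lt h0 h1, ?_, h3, h4⟩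
    have : a * L * ((k : ℝ) + 1) ≤ M := by
      rw [hM_def]; nlinarith
    linarith
  have hφC : ∀ k : ℕ, k ≤ N → IntegrableOn φ (C k) volume := fun k hk =>
    hφ.mono_set (hCsub k hk)
  -- preimage identity
  have hpre : ∀ k : ℕ,
      (fun y : ℝ × ℝ => (a * y.1 + a * L * k, ε * y.2)) ⁻¹' (C k) = Ystar := by
    intro k
    ext y
    have haarg : (a * y.1 + a * L * k) / a = y.1 + L * k := by field_simp
    simp only [Set.mem_preimage, hC_def, hY_def, Set.mem_setOf_eq, haarg,
      periodic_nat g L hgper y.1 k]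
    constructor
    · rintro ⟨h1, h2, h3, h4⟩
      refine ⟨by nlinarith, by nlinarith, by nlinarith, by nlinarith⟩
    · rintro ⟨h1, h2, h3, h4⟩
      refine ⟨by nlinarith, by nlinarith, by nlinarith, by nlinarith⟩
  -- integrability and values of the unfolded integrand for each cell
  have hψint : ∀ k : ℕ, k ≤ N →
      IntegrableOn (fun y : ℝ × ℝ => φ (a * y.1 + a * L * k, ε * y.2)) Ystar volume := by
    intro k hk
    rw [← hpre k]
    exact cov_int φ a ε (a * L * k) ha hε (hCmeas k) (hφC k hk)
  have hψval : ∀ k : ℕ,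
      ∫ y in Ystar, φ (a * y.1 + a * L * k, ε * y.2)
        = (a * ε)⁻¹ * ∫ p in C k, φ p := by
    intro k
    rw [← hpre k]
    exact cov φ a ε (a * L * k) ha hε (C k)
  -- Step 1 : reduce the LHS integral to `Ioo 0 M ×ˢ Ystar`
  have hSeq : {q : ℝ × ℝ × ℝ |
      q.1 ∈ Ioo (0:ℝ) 1 ∧ 0 < q.2.1 ∧ q.2.1 < L ∧ 0 < q.2.2 ∧ q.2.2 < g q.2.1}
      = Ioo (0:ℝ) 1 ×ˢ Ystar := by
    ext q
    simp only [Set.mem_setOf_eq, Set.mem_prod, hY_def]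
  have hstep1 : (∫ q in {q : ℝ × ℝ × ℝ |
        q.1 ∈ Ioo (0:ℝ) 1 ∧ 0 < q.2.1 ∧ q.2.1 < L ∧ 0 < q.2.2 ∧ q.2.2 < g q.2.1},
        if q.1 ∈ Ioo (0:ℝ) M then
          φ (a * (⌊q.1 / a / L⌋ : ℝ) * L + a * q.2.1, ε * q.2.2)
        else 0)
      = ∫ q in Ioo (0:ℝ) M ×ˢ Ystar,
          φ (a * (⌊q.1 / a / L⌋ : ℝ) * L + a * q.2.1, ε * q.2.2) := by
    rw [hSeq]
    have hiff : ∀ q : ℝ × ℝ × ℝ,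
        (if q.1 ∈ Ioo (0:ℝ) M then
          φ (a * (⌊q.1 / a / L⌋ : ℝ) * L + a * q.2.1, ε * q.2.2) else 0)
        = Set.indicator (Ioo (0:ℝ) M ×ˢ (univ : Set (ℝ × ℝ)))
            (fun q : ℝ × ℝ × ℝ =>
              φ (a * (⌊q.1 / a / L⌋ : ℝ) * L + a * q.2.1, ε * q.2.2)) q := by
      intro q
      rw [Set.indicator_apply]
      by_cases h : q.1 ∈ Ioo (0:ℝ) M
      · rw [if_pos h, if_pos (Set.mem_prod.mpr ⟨h, Set.mem_univ _⟩)]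
      · rw [if_neg h, if_neg (fun hq => h (Set.mem_prod.mp hq).1)]
    simp_rw [hiff]
    rw [MeasureTheory.setIntegral_indicator (measurableSet_Ioo.prod MeasurableSet.univ)]
    congr 1
    rw [Set.prod_inter_prod, Set.inter_univ, Set.Ioo_inter_Ioo, max_self, min_eq_right hM1]
  -- Step 2 : replace `Ioo 0 M` by `Ico 0 M` (they differ by a null set)
  have hstep2 : (∫ q in Ioo (0:ℝ) M ×ˢ Ystar,
        φ (a * (⌊q.1 / a / L⌋ : ℝ) * L + a * q.2.1, ε * q.2.2))
      = ∫ q in Ico (0:ℝ) M ×ˢ Ystar,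
        φ (a * (⌊q.1 / a / L⌋ : ℝ) * L + a * q.2.1, ε * q.2.2) := by
    apply setIntegral_congr_set
    apply ae_eq_of_diff_subset (null_vline3 0)
    · rintro q ⟨hs, hns⟩
      exact absurd (Set.mem_prod.mpr ⟨Set.Ioo_subset_Ico_self (Set.mem_prod.mp hs).1,
        (Set.mem_prod.mp hs).2⟩) hns
    · rintro q ⟨hs, hns⟩
      obtain ⟨hx, hy⟩ := Set.mem_prod.mp hs
      have hx1 : (0:ℝ) ≤ q.1 := hx.1
      have hx2 : q.1 < M := hx.2
      by_contra hne
      have h0 : 0 < q.1 := lt_of_le_of_ne hx1 (Ne.symm hne)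
      exact hns (Set.mem_prod.mpr ⟨⟨h0, hx2⟩, hy⟩)
  -- Step 3 : decompose the x-range into the `N+1` periodicity cells
  have hunion3 : Ico (0:ℝ) M ×ˢ Ystar
      = ⋃ k ∈ Finset.range (N + 1), (Ico (a*L*k) (a*L*(k+1)) ×ˢ Ystar) := by
    rw [hM_def, ← union_Ico (a*L) haL N]
    ext q
    simp only [Set.mem_prod, Set.mem_iUnion, Finset.mem_range]
    constructor
    · rintro ⟨⟨k, hk, hx⟩, hy⟩
      exact ⟨k, hk, hx, hy⟩
    · rintro ⟨k, hk, hx, hy⟩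
      exact ⟨⟨k, hk, hx⟩, hy⟩
  -- on each cell the floor is constant
  have hfloor : ∀ k : ℕ, ∀ q : ℝ × ℝ × ℝ, q ∈ Ico (a*L*k) (a*L*(k+1)) ×ˢ Ystar →
      φ (a * (⌊q.1 / a / L⌋ : ℝ) * L + a * q.2.1, ε * q.2.2)
        = φ (a * q.2.1 + a * L * k, ε * q.2.2) := by
    intro k q hq
    have h1 : ⌊q.1 / a / L⌋ = k := by
      rw [div_div]; exact floor_eq_on_Ico (a*L) haL k (Set.mem_prod.mp hq).1
    rw [h1]
    have h2 : a * ((k : ℤ) : ℝ) * L + a * q.2.1 = a * q.2.1 + a * L * k := by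
      push_cast; ring
    rw [h2]
  -- integrability of the unfolded integrand on each cell
  have hintcell : ∀ k ∈ Finset.range (N + 1),
      IntegrableOn (fun q : ℝ × ℝ × ℝ =>
          φ (a * (⌊q.1 / a / L⌋ : ℝ) * L + a * q.2.1, ε * q.2.2))
        (Ico (a*L*k) (a*L*(k+1)) ×ˢ Ystar) volume := by
    intro k hk
    have hk' : k ≤ N := Nat.lt_succ_iff.mp (Finset.mem_range.mp hk)
    have hbase : IntegrableOn (fun q : ℝ × ℝ × ℝ => φ (a * q.2.1 + a * L * k, ε * q.2.2))
        (Ico (a*L*k) (a*L*(k+1)) ×ˢ Ystar) volume := by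
      rw [IntegrableOn, Measure.volume_eq_prod, ← Measure.prod_restrict]
      have h1 : Integrable (fun _ : ℝ => (1:ℝ))
          (volume.restrict (Ico (a*L*k) (a*L*(k+1)))) := by
        apply (integrableOn_const_iff).mpr
        right
        rw [Real.volume_Ico]
        exact ENNReal.ofReal_lt_top
      have h2 : Integrable (fun y : ℝ × ℝ => φ (a * y.1 + a * L * k, ε * y.2))
          (volume.restrict Ystar) := hψint k hk'
      have h3 := h1.mul_prod h2
      simpa using h3
    exact hbase.congr_fun (fun q hq => (hfloor k q hq).symm)
      (measurableSet_Ico.prod hYmeas)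
  -- Step 4 : sum over the cells
  have hsum3 : (∫ q in Ico (0:ℝ) M ×ˢ Ystar,
        φ (a * (⌊q.1 / a / L⌋ : ℝ) * L + a * q.2.1, ε * q.2.2))
      = ∑ k ∈ Finset.range (N + 1), ∫ q in Ico (a*L*k) (a*L*(k+1)) ×ˢ Ystar,
          φ (a * (⌊q.1 / a / L⌋ : ℝ) * L + a * q.2.1, ε * q.2.2) := by
    rw [hunion3]
    exact integral_biUnion_finset _ (fun k _ => measurableSet_Ico.prod hYmeas)
      (fun i _ j _ hij => Set.disjoint_left.mpr fun p hp hq =>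
        Set.disjoint_left.mp (disj_Ico (a*L) haL hij)
          (Set.mem_prod.mp hp).1 (Set.mem_prod.mp hq).1)
      hintcell
  -- Step 5 : value of the integral on each cell
  have hIco1 : ∀ k : ℕ, ∫ _x in Ico (a*L*k) (a*L*(k+1)), (1:ℝ) = a * L := by
    intro k
    rw [MeasureTheory.setIntegral_const, measureReal_def, Real.volume_Ico, smul_eq_mul,
      ENNReal.toReal_ofReal (by nlinarith)]
    ring
  have hcell : ∀ k : ℕ,
      (∫ q in Ico (a*L*k) (a*L*(k+1)) ×ˢ Ystar,
        φ (a * (⌊q.1 / a / L⌋ : ℝ) * L + a * q.2.1, ε * q.2.2))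
      = (a*L) * ((a*ε)⁻¹ * ∫ p in C k, φ p) := by
    intro k
    rw [setIntegral_congr_fun (measurableSet_Ico.prod hYmeas) (fun q hq => hfloor k q hq)]
    have e2 : (volume : Measure (ℝ × (ℝ × ℝ))).restrict (Ico (a*L*k) (a*L*(k+1)) ×ˢ Ystar)
        = (volume.restrict (Ico (a*L*k) (a*L*(k+1)))).prod (volume.restrict Ystar) := by
      rw [Measure.volume_eq_prod, Measure.prod_restrict]
    rw [e2]
    have e3 := integral_prod_mul (μ := volume.restrict (Ico (a*L*k) (a*L*(k+1))))
      (ν := volume.restrict Ystar) (f := fun _ : ℝ => (1:ℝ))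
      (g := fun y : ℝ × ℝ => φ (a * y.1 + a * L * k, ε * y.2))
    simp only [one_mul] at e3
    rw [e3, hψval k, hIco1 k]
  -- Step 6 : reassemble the right-hand side
  have hCEae : ∀ k : ℕ, (E k : Set (ℝ × ℝ)) =ᵐ[volume] C k := by
    intro k
    apply ae_eq_of_diff_subset (null_vline (a*L*k))
    · rintro p ⟨hpE, hpnC⟩
      simp only [hE_def, Set.mem_setOf_eq] at hpE
      simp only [hC_def, Set.mem_setOf_eq] at hpnC
      obtain ⟨h1, h2, h3, h4⟩ := hpE
      by_contra hne
      exact hpnC ⟨lt_of_le_of_ne h1 (Ne.symm (fun hh => hne hh)), h2, h3, h4⟩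
    · rintro p ⟨hpC, hpnE⟩
      simp only [hC_def, Set.mem_setOf_eq] at hpC
      simp only [hE_def, Set.mem_setOf_eq] at hpnE
      exact absurd ⟨hpC.1.le, hpC.2.1, hpC.2.2.1, hpC.2.2.2⟩ hpnE
  have hCE : ∀ k : ℕ, ∫ p in C k, φ p = ∫ p in E k, φ p :=
    fun k => (setIntegral_congr_set (hCEae k)).symm
  have hEint : ∀ k ∈ Finset.range (N + 1), IntegrableOn φ (E k) volume := by
    intro k hk
    have hk' : k ≤ N := Nat.lt_succ_iff.mp (Finset.mem_range.mp hk)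
    exact (hφC k hk').congr_set_ae (hCEae k)
  have hunion2 : (⋃ k ∈ Finset.range (N + 1), E k)
      = {p : ℝ × ℝ | p.1 ∈ Ico (0:ℝ) M ∧ 0 < p.2 ∧ p.2 < ε * g (p.1 / a)} := by
    ext p
    simp only [Set.mem_iUnion, Finset.mem_range, hE_def, Set.mem_setOf_eq]
    rw [hM_def, ← union_Ico (a*L) haL N]
    simp only [Set.mem_iUnion, Finset.mem_range, Set.mem_Ico]
    constructor
    · rintro ⟨k, hk, h1, h2, h3, h4⟩
      exact ⟨⟨k, hk, h1, h2⟩, h3, h4⟩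
    · rintro ⟨⟨k, hk, h1, h2⟩, h3, h4⟩
      exact ⟨k, hk, h1, h2, h3, h4⟩
  have hsum2 : (∑ k ∈ Finset.range (N + 1), ∫ p in E k, φ p)
      = ∫ p in {p : ℝ × ℝ | p.1 ∈ Ico (0:ℝ) M ∧ 0 < p.2 ∧ p.2 < ε * g (p.1 / a)}, φ p := by
    rw [← hunion2]
    refine (integral_biUnion_finset _ (fun k _ => hEmeas k) ?_ hEint).symm
    intro i _ j _ hij
    refine Set.disjoint_left.mpr fun p hp hq => ?_
    simp only [hE_def, Set.mem_setOf_eq] at hp hq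
    exact Set.disjoint_left.mp (disj_Ico (a*L) haL hij)
      (Set.mem_Ico.mpr ⟨hp.1, hp.2.1⟩) (Set.mem_Ico.mpr ⟨hq.1, hq.2.1⟩)
  have hfinal2 : (∫ p in {p : ℝ × ℝ | p.1 ∈ Ico (0:ℝ) M ∧ 0 < p.2 ∧ p.2 < ε * g (p.1 / a)}, φ p)
      = ∫ p in {p : ℝ × ℝ | p.1 ∈ Ioo (0:ℝ) M ∧ 0 < p.2 ∧ p.2 < ε * g (p.1 / a)}, φ p := by
    apply setIntegral_congr_set
    apply ae_eq_of_diff_subset (null_vline 0)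
    · rintro p ⟨hs, hns⟩
      simp only [Set.mem_setOf_eq, Set.mem_Ico, Set.mem_Ioo] at hs hns
      obtain ⟨⟨h1, h2⟩, h3, h4⟩ := hs
      by_contra hne
      exact hns ⟨⟨lt_of_le_of_ne h1 (Ne.symm hne), h2⟩, h3, h4⟩
    · rintro p ⟨hs, hns⟩
      simp only [Set.mem_setOf_eq, Set.mem_Ico, Set.mem_Ioo] at hs hns
      exact absurd ⟨⟨hs.1.1.le, hs.1.2⟩, hs.2⟩ hns
  -- Final assembly
  rw [hstep1, hstep2, hsum3, ← hfinal2, ← hsum2, Finset.mul_sum, Finset.mul_sum]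
  refine Finset.sum_congr rfl fun k _ => ?_
  rw [hcell k, hCE k]
  have hLne : L ≠ 0 := hL.ne'
  have hane : a ≠ 0 := ha.ne'
  have hεne : ε ≠ 0 := hε.ne'
  field_simp
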